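/- arXiv:1908.09135 — 6 statements merged into one kernel-verified Lean document; each statement's English description precedes it below -/
import Mathlib

section
/- The interpolation is exact on the given collection: g_C(C_i) = f(C_i) for every i = 1,…,m. -/
private lemma margin_filter_congr {n : ℕ} {S : Finset (Fin n)} {m : Fin n}
    (hm : ∀ i ∈ S.erase m, i < m) :
    ∀ i ∈ S.erase m,
      (S.filter (· ≤ i) = (S.erase m).filter (· ≤ i)) ∧
      (S.filter (· < i) = (S.erase m).filter (· < i)) := by
  intro i hi
  have hlt := hm i hi
  constructor
  · rw [Finset.filter_erase, Finset.erase_eq_of_notMem]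
    simp only [Finset.mem_filter, not_and]
    exact fun _ h => absurd (lt_of_le_of_lt h hlt) (lt_irrefl m)
  · rw [Finset.filter_erase, Finset.erase_eq_of_notMem]
    simp only [Finset.mem_filter, not_and]
    exact fun _ h => absurd (lt_trans h hlt) (lt_irrefl m)

private lemma filter_le_max {n : ℕ} (S : Finset (Fin n)) (hS : S.Nonempty) :
    S.filter (· ≤ S.max' hS) = S := by
  apply Finset.filter_true_of_mem
  intro i hi; exact S.le_max' i hi

private lemma filter_lt_max {n : ℕ} (S : Finset (Fin n)) (hS : S.Nonempty) :
    S.filter (· < S.max' hS) = S.erase (S.max' hS) := by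
  ext i
  simp only [Finset.mem_filter, Finset.mem_erase]
  constructor
  · rintro ⟨h1, h2⟩; exact ⟨ne_of_lt h2, h1⟩
  · rintro ⟨h1, h2⟩; exact ⟨h2, lt_of_le_of_ne (S.le_max' i h2) h1⟩

private lemma sum_margin_eq {n : ℕ} (f : Finset (Fin n) → ℝ) (hnorm : f ∅ = 0) :
    ∀ S : Finset (Fin n),
      ∑ i ∈ S, (f (S.filter (· ≤ i)) - f (S.filter (· < i))) = f S := by
  intro S
  induction S using Finset.strongInduction with
  | _ S ih =>
    rcases S.eq_empty_or_nonempty with rfl | hS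
    · simp [hnorm]
    · set m := S.max' hS with hmdef
      have hm : m ∈ S := S.max'_mem hS
      have hmax : ∀ i ∈ S.erase m, i < m := fun i hi =>
        lt_of_le_of_ne (S.le_max' i (Finset.mem_erase.mp hi).2) (Finset.mem_erase.mp hi).1
      have hcongr := margin_filter_congr hmax
      have hins : S = insert m (S.erase m) := (Finset.insert_erase hm).symm
      rw [hins, Finset.sum_insert (Finset.notMem_erase m S)]
      rw [← hins]
      have hsum : ∑ i ∈ S.erase m, (f (S.filter (· ≤ i)) - f (S.filter (· < i)))
          = ∑ i ∈ S.erase m, (f ((S.erase m).filter (· ≤ i)) - f ((S.erase m).filter (· < i))) := by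
        apply Finset.sum_congr rfl
        intro i hi
        rw [(hcongr i hi).1, (hcongr i hi).2]
      rw [hsum, ih (S.erase m) (Finset.erase_ssubset hm), filter_le_max S hS, filter_lt_max S hS]
      ring

private lemma sum_margin_le {n : ℕ} (f : Finset (Fin n) → ℝ) (hnorm : f ∅ = 0)
    (hsubmod : ∀ S T : Finset (Fin n), f (S ∪ T) + f (S ∩ T) ≤ f S + f T) :
    ∀ S A : Finset (Fin n),
      ∑ i ∈ S ∩ A, (f (S.filter (· ≤ i)) - f (S.filter (· < i))) ≤ f (S ∩ A) := by
  intro S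
  induction S using Finset.strongInduction with
  | _ S ih =>
    rcases S.eq_empty_or_nonempty with rfl | hS
    · simp [hnorm]
    · intro A
      set m := S.max' hS with hmdef
      have hm : m ∈ S := S.max'_mem hS
      have hmax : ∀ i ∈ S.erase m, i < m := fun i hi =>
        lt_of_le_of_ne (S.le_max' i (Finset.mem_erase.mp hi).2) (Finset.mem_erase.mp hi).1
      have hcongr := margin_filter_congr hmax
      have hsub : S.erase m ⊂ S := Finset.erase_ssubset hm
      have hEA : (S.erase m) ∩ A = (S ∩ A).erase m := by
        rw [Finset.erase_inter]
      have hsum' : ∑ i ∈ (S.erase m) ∩ A, (f (S.filter (· ≤ i)) - f (S.filter (· < i)))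
          ≤ f ((S.erase m) ∩ A) := by
        calc ∑ i ∈ (S.erase m) ∩ A, (f (S.filter (· ≤ i)) - f (S.filter (· < i)))
            = ∑ i ∈ (S.erase m) ∩ A, (f ((S.erase m).filter (· ≤ i)) - f ((S.erase m).filter (· < i))) := by
              apply Finset.sum_congr rfl
              intro i hi
              have hi' : i ∈ S.erase m := Finset.mem_of_mem_inter_left hi
              rw [(hcongr i hi').1, (hcongr i hi').2]
          _ ≤ f ((S.erase m) ∩ A) := ih (S.erase m) hsub A
      by_cases hmA : m ∈ A
      · have hmSA : m ∈ S ∩ A := Finset.mem_inter.mpr ⟨hm, hmA⟩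
        have hins : S ∩ A = insert m ((S ∩ A).erase m) := (Finset.insert_erase hmSA).symm
        rw [hins, Finset.sum_insert (Finset.notMem_erase _ _), ← hEA]
        rw [filter_le_max S hS, filter_lt_max S hS, ← hmdef]
        have key := hsubmod (S.erase m) (insert m ((S.erase m) ∩ A))
        have hu : (S.erase m) ∪ insert m ((S.erase m) ∩ A) = S := by
          have h0 : S.erase m ∪ (S.erase m ∩ A) = S.erase m :=
            Finset.union_eq_left.mpr Finset.inter_subset_left
          rw [Finset.union_insert, h0, Finset.insert_erase hm]
        have hi2 : (S.erase m) ∩ insert m ((S.erase m) ∩ A) = (S.erase m) ∩ A := by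
          ext x
          simp only [Finset.mem_inter, Finset.mem_insert, Finset.mem_erase]
          constructor
          · rintro ⟨⟨hx1, hx2⟩, hx3 | ⟨⟨_, _⟩, hx4⟩⟩
            · exact absurd hx3 hx1
            · exact ⟨⟨hx1, hx2⟩, hx4⟩
          · rintro ⟨hx1, hx2⟩; exact ⟨hx1, Or.inr ⟨hx1, hx2⟩⟩
        rw [hu, hi2] at key
        linarith [hsum']
      · have hSA : S ∩ A = (S.erase m) ∩ A := by
          rw [hEA, Finset.erase_eq_of_notMem]
          simp only [Finset.mem_inter, not_and]
          exact fun _ => hmA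
        rw [hSA]
        exact hsum'

/-- The interpolation is exact on the given collection: `g_C(C_i) = f(C_i)` for each
member `C_i` of the collection. -/
theorem imitated_lovasz_exact_on_collection {n : ℕ} (f : Finset (Fin n) → ℝ)
    (C : Finset (Finset (Fin n)))
    (hnorm : f ∅ = 0)
    (hmono : ∀ S T : Finset (Fin n), S ⊆ T → f S ≤ f T)
    (hsubmod : ∀ S T : Finset (Fin n), f (S ∪ T) + f (S ∩ T) ≤ f S + f T)
    (PC : Set (Fin n → ℝ))
    (hPC : PC = { z | (∀ i, 0 ≤ z i) ∧ ∀ Ci ∈ C, ∑ i ∈ Ci, z i ≤ f Ci }) :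
    ∀ Ci ∈ C, ∀ gCCi : ℝ,
      IsGreatest { t : ℝ | ∃ z ∈ PC, t = ∑ i ∈ Ci, z i } gCCi → gCCi = f Ci := by
  intro Ci hCi gCCi hg
  obtain ⟨hmem, hub⟩ := hg
  -- the greedy vertex
  set z : Fin n → ℝ := fun i =>
    if i ∈ Ci then f (Ci.filter (· ≤ i)) - f (Ci.filter (· < i)) else 0 with hz
  have hz_nonneg : ∀ i, 0 ≤ z i := by
    intro i
    simp only [hz]
    split
    · have : Ci.filter (· < i) ⊆ Ci.filter (· ≤ i) := by
        intro x hx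
        simp only [Finset.mem_filter] at hx ⊢
        exact ⟨hx.1, le_of_lt hx.2⟩
      linarith [hmono _ _ this]
    · exact le_refl 0
  have hz_sum : ∀ A : Finset (Fin n),
      ∑ i ∈ A, z i = ∑ i ∈ Ci ∩ A, (f (Ci.filter (· ≤ i)) - f (Ci.filter (· < i))) := by
    intro A
    rw [Finset.inter_comm, ← Finset.filter_mem_eq_inter, Finset.sum_filter]
  have hCi_sum : ∑ i ∈ Ci, z i = f Ci := by
    rw [hz_sum Ci, Finset.inter_self, sum_margin_eq f hnorm]
  have hzPC : z ∈ PC := by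
    rw [hPC]
    refine ⟨hz_nonneg, fun Cj hCj => ?_⟩
    rw [hz_sum Cj]
    calc ∑ i ∈ Ci ∩ Cj, (f (Ci.filter (· ≤ i)) - f (Ci.filter (· < i)))
        ≤ f (Ci ∩ Cj) := sum_margin_le f hnorm hsubmod Ci Cj
      _ ≤ f Cj := hmono _ _ Finset.inter_subset_right
  have h1 : gCCi ≤ f Ci := by
    obtain ⟨z', hz', hz'eq⟩ := hmem
    rw [hPC] at hz'
    rw [hz'eq]
    exact hz'.2 Ci hCi
  have h2 : f Ci ≤ gCCi := by
    apply hub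
    exact ⟨z, hzPC, hCi_sum.symm⟩
  linarith
end

section
/- The explicit function f(S) = (7 − |S|)·|S| on subsets of V = {1,2,3} is submodular and nondecreasing, but its subadditive interpolation g_C with C = 2^V \ {V} is not submodular: g_C({1}) = 6, g_C({1,2}) = g_C({1,3}) = 10, and g_C({1,2,3}) = 15, so g_C({1,2}) + g_C({1,3}) < g_C({1,2,3}) + g_C({1}). -/
set_option maxHeartbeats 1000000


/-- The function `f(S) = (7 − |S|)|S|` on subsets of a 3-element set is submodular and
nondecreasing, but its subadditive interpolation `g_C` (with `C` the proper subsets)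
is not submodular: `g_C({1}) = 6`, `g_C({1,2}) = g_C({1,3}) = 10`,
`g_C({1,2,3}) = 15`, so `g_C({1,2}) + g_C({1,3}) < g_C({1,2,3}) + g_C({1})`. -/
theorem interpolation_not_submodular (f : Finset (Fin 3) → ℝ)
    (hf : ∀ S : Finset (Fin 3), f S = (7 - (S.card : ℝ)) * (S.card : ℝ))
    (PC : Set (Fin 3 → ℝ))
    (hPC : PC = { z | (∀ i, 0 ≤ z i) ∧
      ∀ C : Finset (Fin 3), C ≠ Finset.univ → ∑ i ∈ C, z i ≤ f C })
    (gC : Finset (Fin 3) → ℝ)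
    (hgC : ∀ S : Finset (Fin 3), gC S = sSup { t : ℝ | ∃ z ∈ PC, t = ∑ i ∈ S, z i }) :
    (∀ S T : Finset (Fin 3), S ⊆ T → f S ≤ f T) ∧
    (∀ S T : Finset (Fin 3), f (S ∪ T) + f (S ∩ T) ≤ f S + f T) ∧
    gC {0} = 6 ∧ gC {0, 1} = 10 ∧ gC {0, 2} = 10 ∧ gC Finset.univ = 15 ∧
    gC {0, 1} + gC {0, 2} < gC Finset.univ + gC {0} := by
  have hmem : ∀ z : Fin 3 → ℝ, (∀ i, 0 ≤ z i) →
      (∀ C : Finset (Fin 3), C ≠ Finset.univ → ∑ i ∈ C, z i ≤ f C) → z ∈ PC := by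
    intro z h1 h2; rw [hPC]; exact ⟨h1, h2⟩
  have hval : ∀ z : Fin 3 → ℝ, z ∈ PC →
      (∀ i, 0 ≤ z i) ∧ ∀ C : Finset (Fin 3), C ≠ Finset.univ → ∑ i ∈ C, z i ≤ f C := by
    intro z hz; rw [hPC] at hz; exact hz
  -- witness membership helper
  have hcheck : ∀ z : Fin 3 → ℝ, 0 ≤ z 0 → 0 ≤ z 1 → 0 ≤ z 2 →
      z 0 ≤ 6 → z 1 ≤ 6 → z 2 ≤ 6 → z 0 + z 1 ≤ 10 → z 0 + z 2 ≤ 10 → z 1 + z 2 ≤ 10 →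
      z ∈ PC := by
    intro z p0 p1 p2 a0 a1 a2 b0 b1 b2
    apply hmem
    · intro i; fin_cases i <;> assumption
    · intro C hC
      fin_cases C <;> first
        | exact (hC (by decide)).elim
        | (simp [hf] <;> norm_num <;> linarith)
  have g1 : gC {0} = 6 := by
    rw [hgC]
    apply IsGreatest.csSup_eq
    constructor
    · refine ⟨![6, 0, 0], hcheck _ (by norm_num [Matrix.cons_val_two]) (by norm_num [Matrix.cons_val_two]) (by norm_num [Matrix.cons_val_two]) (by norm_num [Matrix.cons_val_two])
        (by norm_num [Matrix.cons_val_two]) (by norm_num [Matrix.cons_val_two]) (by norm_num [Matrix.cons_val_two]) (by norm_num [Matrix.cons_val_two]) (by norm_num [Matrix.cons_val_two]), ?_⟩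
      simp
    · rintro t ⟨z, hz, rfl⟩
      obtain ⟨-, h2⟩ := hval z hz
      have := h2 {0} (by decide)
      have e : (({0} : Finset (Fin 3)).card) = 1 := rfl
      rw [hf, e, Finset.sum_singleton] at this
      rw [Finset.sum_singleton]
      norm_num at this
      linarith
  have g2 : gC {0, 1} = 10 := by
    rw [hgC]
    apply IsGreatest.csSup_eq
    constructor
    · refine ⟨![6, 4, 0], hcheck _ (by norm_num [Matrix.cons_val_two]) (by norm_num [Matrix.cons_val_two]) (by norm_num [Matrix.cons_val_two]) (by norm_num [Matrix.cons_val_two])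
        (by norm_num [Matrix.cons_val_two]) (by norm_num [Matrix.cons_val_two]) (by norm_num [Matrix.cons_val_two]) (by norm_num [Matrix.cons_val_two]) (by norm_num [Matrix.cons_val_two]), ?_⟩
      rw [Finset.sum_pair (by decide)]; norm_num
    · rintro t ⟨z, hz, rfl⟩
      obtain ⟨-, h2⟩ := hval z hz
      have := h2 {0, 1} (by decide)
      have e : (({0, 1} : Finset (Fin 3)).card) = 2 := rfl
      rw [hf, e, Finset.sum_pair (by decide)] at this
      rw [Finset.sum_pair (by decide)]
      norm_num at this
      linarith
  have g3 : gC {0, 2} = 10 := by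
    rw [hgC]
    apply IsGreatest.csSup_eq
    constructor
    · refine ⟨![6, 0, 4], hcheck _ (by norm_num [Matrix.cons_val_two]) (by norm_num [Matrix.cons_val_two]) (by norm_num [Matrix.cons_val_two]) (by norm_num [Matrix.cons_val_two])
        (by norm_num [Matrix.cons_val_two]) (by norm_num [Matrix.cons_val_two]) (by norm_num [Matrix.cons_val_two]) (by norm_num [Matrix.cons_val_two]) (by norm_num [Matrix.cons_val_two]), ?_⟩
      rw [Finset.sum_pair (by decide)]; norm_num [Matrix.cons_val_two]
    · rintro t ⟨z, hz, rfl⟩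
      obtain ⟨-, h2⟩ := hval z hz
      have := h2 {0, 2} (by decide)
      have e : (({0, 2} : Finset (Fin 3)).card) = 2 := rfl
      rw [hf, e, Finset.sum_pair (by decide)] at this
      rw [Finset.sum_pair (by decide)]
      norm_num at this
      linarith
  have g4 : gC Finset.univ = 15 := by
    rw [hgC]
    apply IsGreatest.csSup_eq
    constructor
    · refine ⟨![5, 5, 5], hcheck _ (by norm_num [Matrix.cons_val_two]) (by norm_num [Matrix.cons_val_two]) (by norm_num [Matrix.cons_val_two]) (by norm_num [Matrix.cons_val_two])
        (by norm_num [Matrix.cons_val_two]) (by norm_num [Matrix.cons_val_two]) (by norm_num [Matrix.cons_val_two]) (by norm_num [Matrix.cons_val_two]) (by norm_num [Matrix.cons_val_two]), ?_⟩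
      rw [Fin.sum_univ_three]; norm_num [Matrix.cons_val_two]
    · rintro t ⟨z, hz, rfl⟩
      obtain ⟨-, h2⟩ := hval z hz
      have h01 := h2 {0, 1} (by decide)
      have h02 := h2 {0, 2} (by decide)
      have h12 := h2 {1, 2} (by decide)
      have e1 : (({0, 1} : Finset (Fin 3)).card) = 2 := rfl
      have e2 : (({0, 2} : Finset (Fin 3)).card) = 2 := rfl
      have e3 : (({1, 2} : Finset (Fin 3)).card) = 2 := rfl
      rw [hf, e1, Finset.sum_pair (by decide)] at h01
      rw [hf, e2, Finset.sum_pair (by decide)] at h02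
      rw [hf, e3, Finset.sum_pair (by decide)] at h12
      rw [Fin.sum_univ_three]
      norm_num at h01 h02 h12
      linarith
  refine ⟨?_, ?_, g1, g2, g3, g4, by rw [g1, g2, g3, g4]; norm_num⟩
  · intro S T hST
    rw [hf, hf]
    have h1 : S.card ≤ T.card := Finset.card_le_card hST
    have h2 : T.card ≤ 3 := by simpa using Finset.card_le_univ T
    have h1' : (S.card : ℝ) ≤ T.card := by exact_mod_cast h1
    have h2' : (T.card : ℝ) ≤ 3 := by exact_mod_cast h2
    nlinarith [h1', h2', Nat.cast_nonneg (α := ℝ) S.card]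
  · intro S T
    rw [hf, hf, hf, hf]
    have hc : (S ∪ T).card + (S ∩ T).card = S.card + T.card :=
      Finset.card_union_add_card_inter S T
    have hc' : ((S ∪ T).card : ℝ) + ((S ∩ T).card : ℝ) = S.card + T.card := by
      exact_mod_cast hc
    have ha : (S.card : ℝ) ≤ (S ∪ T).card := by
      exact_mod_cast Finset.card_le_card (Finset.subset_union_left)
    have hb : (T.card : ℝ) ≤ (S ∪ T).card := by
      exact_mod_cast Finset.card_le_card (Finset.subset_union_right)
    nlinarith [ha, hb, hc']
end

section
/- Non-uniform curvature sandwich: for a normalized nondecreasing subadditive set function g with g({i}) > 0 for all i, and for any S ⊆ V with 0 < κ_g(S) < 1, one has g(S) ≤ Σ_{i∈S} g({i}) ≤ (|S| / (1 + (|S| − 1)(1 − κ_g(S))))·g(S). -/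
/-- The curvature of a set function `g` at `S`:
`κ_g(S) = 1 − min_{A ⊆ S, i ∈ A} (g(A) − g(A \ {i})) / g({i})`. -/
noncomputable def curvature {V : Type*} [DecidableEq V] (g : Finset V → ℝ)
    (S : Finset V) : ℝ :=
  1 - sInf { r : ℝ | ∃ (A : Finset V) (i : V), i ∈ A ∧ A ⊆ S ∧
    r = (g A - g (A.erase i)) / g {i} }

/-- Non-uniform curvature sandwich. -/
theorem nonuniform_curvature_sandwich {V : Type*} [DecidableEq V] [Fintype V]
    (g : Finset V → ℝ)
    (hnorm : g ∅ = 0)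
    (hmono : ∀ S T : Finset V, S ⊆ T → g S ≤ g T)
    (hsub : ∀ S T : Finset V, g (S ∪ T) ≤ g S + g T)
    (hpos : ∀ i : V, 0 < g {i}) :
    ∀ S : Finset V, 0 < curvature g S → curvature g S < 1 →
      g S ≤ ∑ i ∈ S, g {i} ∧
      ∑ i ∈ S, g {i} ≤
        ((S.card : ℝ) / (1 + ((S.card : ℝ) - 1) * (1 - curvature g S))) * g S := by
  intro S hk0 hk1
  set Rset := { r : ℝ | ∃ (A : Finset V) (i : V), i ∈ A ∧ A ⊆ S ∧
    r = (g A - g (A.erase i)) / g {i} } with hR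
  set α := sInf Rset with hα
  have hcurv : curvature g S = 1 - α := rfl
  have hα1 : α < 1 := by
    have := hk0; rw [hcurv] at this; linarith
  have hα0 : 0 < α := by
    have := hk1; rw [hcurv] at this; linarith
  -- S is nonempty
  have hSne : S.Nonempty := by
    by_contra h
    rw [Finset.not_nonempty_iff_eq_empty] at h
    have : Rset = ∅ := by
      ext r
      simp only [hR, Set.mem_setOf_eq, Set.mem_empty_iff_false, iff_false]
      rintro ⟨A, i, hiA, hAS, _⟩
      subst h
      exact absurd (hAS hiA) (by simp)
    rw [this] at hα
    simp [Real.sInf_empty] at hα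
    rw [hα] at hα0
    exact lt_irrefl 0 hα0
  have hbdd : BddBelow Rset := by
    refine ⟨0, ?_⟩
    rintro r ⟨A, i, hiA, hAS, rfl⟩
    apply div_nonneg _ (hpos i).le
    have := hmono (A.erase i) A (Finset.erase_subset i A)
    linarith
  -- key marginal bound
  have hmarg : ∀ A : Finset V, A ⊆ S → ∀ i ∈ A, α * g {i} ≤ g A - g (A.erase i) := by
    intro A hAS i hiA
    have hmem : (g A - g (A.erase i)) / g {i} ∈ Rset := ⟨A, i, hiA, hAS, rfl⟩
    have h := csInf_le hbdd hmem
    rw [le_div_iff₀ (hpos i)] at h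
    linarith
  -- first inequality by induction
  have h1 : ∀ T : Finset V, g T ≤ ∑ i ∈ T, g {i} := by
    intro T
    induction T using Finset.induction_on with
    | empty => simp [hnorm]
    | @insert a s ha ih =>
      rw [Finset.sum_insert ha, Finset.insert_eq]
      calc g ({a} ∪ s) ≤ g {a} + g s := hsub {a} s
        _ ≤ g {a} + ∑ i ∈ s, g {i} := by linarith
  -- key telescoping lemma
  have key : ∀ T : Finset V, T ⊆ S → g (S \ T) + α * ∑ i ∈ T, g {i} ≤ g S := by
    intro T
    induction T using Finset.induction_on with
    | empty => simp
    | @insert a s ha ih =>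
      intro hsub'
      have haS : a ∈ S := hsub' (Finset.mem_insert_self a s)
      have hsS : s ⊆ S := fun x hx => hsub' (Finset.mem_insert_of_mem hx)
      have hin : a ∈ S \ s := Finset.mem_sdiff.mpr ⟨haS, ha⟩
      have herase : (S \ s).erase a = S \ insert a s := by
        ext x; simp [Finset.mem_erase, Finset.mem_sdiff, Finset.mem_insert]
        tauto
      have hm := hmarg (S \ s) (Finset.sdiff_subset) a hin
      rw [herase] at hm
      have ihh := ih hsS
      rw [Finset.sum_insert ha]
      linarith
  -- for each j ∈ S
  have hj : ∀ j ∈ S, g {j} + α * ∑ i ∈ S.erase j, g {i} ≤ g S := by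
    intro j hjS
    have h := key (S.erase j) (Finset.erase_subset j S)
    rw [Finset.sdiff_erase_self hjS] at h
    exact h
  set t := ∑ i ∈ S, g {i} with ht
  set n := (S.card : ℝ) with hn
  have hn1 : 1 ≤ n := by
    rw [hn]
    exact_mod_cast Nat.one_le_iff_ne_zero.mpr (Finset.card_ne_zero_of_mem hSne.choose_spec)
  -- sum over j
  have hsum : (1 + (n - 1) * α) * t ≤ n * g S := by
    have hb : ∀ j ∈ S, g {j} + α * (t - g {j}) ≤ g S := by
      intro j hjS
      have := hj j hjS
      have herase : ∑ i ∈ S.erase j, g {i} = t - g {j} := by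
        rw [ht, ← Finset.sum_erase_add S _ hjS]; ring
      rw [herase] at this
      exact this
    have hsum2 := Finset.sum_le_sum hb
    rw [Finset.sum_const, nsmul_eq_mul] at hsum2
    have hexp : ∑ j ∈ S, (g {j} + α * (t - g {j})) = (1 - α) * t + n * (α * t) := by
      rw [Finset.sum_add_distrib]
      simp only [mul_sub, Finset.sum_sub_distrib, Finset.sum_const, nsmul_eq_mul,
        ← Finset.mul_sum, ← ht]
      ring
    rw [hexp] at hsum2
    have : n * (α * t) = n * α * t := by ring
    nlinarith [hsum2]
  have hD : 0 < 1 + (n - 1) * α := by nlinarith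
  constructor
  · exact h1 S
  · rw [hcurv]
    have hsimp : 1 - (1 - α) = α := by ring
    rw [hsimp, div_mul_eq_mul_div, le_div_iff₀ hD]
    linarith [hsum]
end

section
/- Approximation factor of the initial partition: let g₁,…,g_m be normalized nondecreasing subadditive functions with g_j({i}) > 0 for all i, j. Let S* = (S*₁,…,S*_m) be an m-partition of V minimizing max_j g_j(S_j), and let S⁰ = (S⁰₁,…,S⁰_m) be an m-partition minimizing max_j Σ_{i∈S_j} g_j({i}). Then max_j g_j(S⁰_j) ≤ (max_j |S*_j| / (1 + (|S*_j| − 1)(1 − κ_{g_j}(S*_j)))) · max_j g_j(S*_j). -/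
/-- An `ι`-indexed partition of the ground set: pairwise disjoint blocks covering everything. -/
def IsPartition {V ι : Type*} [DecidableEq V] [Fintype V] [DecidableEq ι] [Fintype ι]
    (S : ι → Finset V) : Prop :=
  (∀ j k : ι, j ≠ k → Disjoint (S j) (S k)) ∧ Finset.univ.biUnion S = Finset.univ

lemma gsum_bound {V : Type*} [DecidableEq V] (g : Finset V → ℝ)
    (h0 : g ∅ = 0) (hsub : ∀ S T, g (S ∪ T) ≤ g S + g T) (A : Finset V) :
    g A ≤ ∑ i ∈ A, g {i} := by
  refine Finset.induction_on A (by simp [h0]) ?_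
  intro a s h ih
  rw [Finset.sum_insert h]
  calc g (insert a s) = g ({a} ∪ s) := by rw [Finset.insert_eq]
    _ ≤ g {a} + g s := hsub _ _
    _ ≤ g {a} + ∑ i ∈ s, g {i} := by linarith

lemma peel_bound {V : Type*} [DecidableEq V] (g : Finset V → ℝ) (c : ℝ) (S : Finset V)
    (hc : ∀ A, A ⊆ S → ∀ i ∈ A, c * g {i} ≤ g A - g (A.erase i)) :
    ∀ A, A ⊆ S → ∀ i₁ ∈ A, (1 - c) * g {i₁} + c * ∑ i ∈ A, g {i} ≤ g A := by
  intro A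
  induction A using Finset.strongInduction with
  | _ A ih =>
    intro hAS i₁ hi₁
    by_cases hx : ∃ i ∈ A, i ≠ i₁
    · obtain ⟨i, hi, hne⟩ := hx
      have hss : A.erase i ⊂ A := Finset.erase_ssubset hi
      have h1 := ih (A.erase i) hss ((Finset.erase_subset _ _).trans hAS)
        i₁ (Finset.mem_erase.mpr ⟨fun h => hne h.symm, hi₁⟩)
      have h2 := hc A hAS i hi
      have hsum : ∑ x ∈ A, g {x} = g {i} + ∑ x ∈ A.erase i, g {x} :=
        (Finset.add_sum_erase _ _ hi).symm
      rw [hsum]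
      linarith
    · push_neg at hx
      have : A = {i₁} := Finset.eq_singleton_iff_unique_mem.mpr ⟨hi₁, hx⟩
      subst this
      simp
      ring_nf
      rfl

lemma singleton_sum_le {V : Type*} [DecidableEq V] (g : Finset V → ℝ) (S : Finset V)
    (hmono : ∀ A B : Finset V, A ⊆ B → g A ≤ g B) (hpos : ∀ i : V, 0 < g {i})
    (hcurv : S.Nonempty → 0 < curvature g S ∧ curvature g S < 1) :
    ∑ i ∈ S, g {i} ≤
      (S.card : ℝ) / (1 + ((S.card : ℝ) - 1) * (1 - curvature g S)) * g S := by
  rcases S.eq_empty_or_nonempty with rfl | hS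
  · simp
  set c := 1 - curvature g S with hcdef
  have hκ := hcurv hS
  have hc0 : 0 < c := by simp only [hcdef]; linarith [hκ.2]
  have hc1 : c < 1 := by simp only [hcdef]; linarith [hκ.1]
  have hcs : c = sInf { r : ℝ | ∃ (A : Finset V) (i : V), i ∈ A ∧ A ⊆ S ∧
      r = (g A - g (A.erase i)) / g {i} } := by
    simp only [hcdef, curvature]; ring
  have hbdd : BddBelow { r : ℝ | ∃ (A : Finset V) (i : V), i ∈ A ∧ A ⊆ S ∧
      r = (g A - g (A.erase i)) / g {i} } := by
    refine ⟨0, ?_⟩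
    rintro r ⟨A, i, hi, hA, rfl⟩
    exact div_nonneg (by linarith [hmono (A.erase i) A (Finset.erase_subset _ _)])
      (hpos i).le
  have hc : ∀ A, A ⊆ S → ∀ i ∈ A, c * g {i} ≤ g A - g (A.erase i) := by
    intro A hAS i hi
    have hmem : (g A - g (A.erase i)) / g {i} ∈ { r : ℝ | ∃ (A : Finset V) (i : V),
        i ∈ A ∧ A ⊆ S ∧ r = (g A - g (A.erase i)) / g {i} } := ⟨A, i, hi, hAS, rfl⟩
    have h := csInf_le hbdd hmem
    rw [← hcs, le_div_iff₀ (hpos i)] at h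
    linarith
  have hpeel := peel_bound g c S hc
  set T := ∑ i ∈ S, g {i} with hT
  set n := (S.card : ℝ) with hn
  have hn1 : (1 : ℝ) ≤ n := by
    have : 1 ≤ S.card := Finset.card_pos.mpr hS
    rw [hn]; exact_mod_cast this
  have hsumle : ∑ i₁ ∈ S, ((1 - c) * g {i₁} + c * T) ≤ ∑ _i₁ ∈ S, g S :=
    Finset.sum_le_sum (fun i₁ h => hpeel S subset_rfl i₁ h)
  rw [Finset.sum_add_distrib, ← Finset.mul_sum, ← hT, Finset.sum_const, Finset.sum_const,
    nsmul_eq_mul, nsmul_eq_mul, ← hn] at hsumle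
  have hD : 0 < 1 + (n - 1) * c := by nlinarith
  have hfinal : (1 + (n - 1) * c) * T ≤ n * g S := by nlinarith
  rw [div_mul_eq_mul_div, le_div_iff₀ hD]
  nlinarith [hfinal]


/-- Approximation factor of the initial partition for nondecreasing subadditive
load balancing. -/
theorem initial_partition_curvature_bound {V ι : Type*}
    [DecidableEq V] [Fintype V] [DecidableEq ι] [Fintype ι] [Nonempty ι]
    (g : ι → Finset V → ℝ)
    (hnorm : ∀ j, g j ∅ = 0)
    (hmono : ∀ j, ∀ S T : Finset V, S ⊆ T → g j S ≤ g j T)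
    (hsub : ∀ j, ∀ S T : Finset V, g j (S ∪ T) ≤ g j S + g j T)
    (hpos : ∀ j, ∀ i : V, 0 < g j {i})
    (Sstar S0 : ι → Finset V)
    (hSstar : IsPartition Sstar)
    (hSstarOpt : ∀ T : ι → Finset V, IsPartition T →
      Finset.univ.sup' Finset.univ_nonempty (fun j => g j (Sstar j)) ≤
        Finset.univ.sup' Finset.univ_nonempty (fun j => g j (T j)))
    (hS0 : IsPartition S0)
    (hS0Opt : ∀ T : ι → Finset V, IsPartition T →
      Finset.univ.sup' Finset.univ_nonempty (fun j => ∑ i ∈ S0 j, g j {i}) ≤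
        Finset.univ.sup' Finset.univ_nonempty (fun j => ∑ i ∈ T j, g j {i}))
    (hcurv : ∀ j, (Sstar j).Nonempty →
      0 < curvature (g j) (Sstar j) ∧ curvature (g j) (Sstar j) < 1) :
    Finset.univ.sup' Finset.univ_nonempty (fun j => g j (S0 j)) ≤
      (Finset.univ.sup' Finset.univ_nonempty (fun j =>
        ((Sstar j).card : ℝ) /
          (1 + (((Sstar j).card : ℝ) - 1) * (1 - curvature (g j) (Sstar j))))) *
      Finset.univ.sup' Finset.univ_nonempty (fun j => g j (Sstar j)) := by
  set α := fun j => ((Sstar j).card : ℝ) /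
      (1 + (((Sstar j).card : ℝ) - 1) * (1 - curvature (g j) (Sstar j))) with hα
  set M := Finset.univ.sup' Finset.univ_nonempty (fun j => g j (Sstar j)) with hM
  set A := Finset.univ.sup' Finset.univ_nonempty α with hA
  have hαnn : ∀ j, 0 ≤ α j := by
    intro j
    rcases (Sstar j).eq_empty_or_nonempty with he | hne
    · simp [hα, he]
    · have hκ := hcurv j hne
      have hn1 : (1 : ℝ) ≤ ((Sstar j).card : ℝ) := by
        exact_mod_cast Finset.card_pos.mpr hne
      have hD : 0 < 1 + (((Sstar j).card : ℝ) - 1) * (1 - curvature (g j) (Sstar j)) := by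
        nlinarith [hκ.1, hκ.2]
      exact div_nonneg (by positivity) hD.le
  have hgnn : ∀ j, 0 ≤ g j (Sstar j) := fun j => by
    have := hmono j ∅ (Sstar j) (Finset.empty_subset _)
    rw [hnorm j] at this; exact this
  have hMnn : 0 ≤ M := by
    obtain ⟨j⟩ := ‹Nonempty ι›
    exact (hgnn j).trans (Finset.le_sup' (fun j => g j (Sstar j)) (Finset.mem_univ j))
  calc Finset.univ.sup' Finset.univ_nonempty (fun j => g j (S0 j))
      ≤ Finset.univ.sup' Finset.univ_nonempty (fun j => ∑ i ∈ S0 j, g j {i}) := by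
        refine Finset.sup'_le _ _ fun j _ => ?_
        exact (gsum_bound (g j) (hnorm j) (hsub j) (S0 j)).trans
          (Finset.le_sup' (fun j => ∑ i ∈ S0 j, g j {i}) (Finset.mem_univ j))
    _ ≤ Finset.univ.sup' Finset.univ_nonempty (fun j => ∑ i ∈ Sstar j, g j {i}) :=
        hS0Opt Sstar hSstar
    _ ≤ A * M := by
        refine Finset.sup'_le _ _ fun j _ => ?_
        have h1 : ∑ i ∈ Sstar j, g j {i} ≤ α j * g j (Sstar j) :=
          singleton_sum_le (g j) (Sstar j) (hmono j) (hpos j) (hcurv j)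
        refine h1.trans (mul_le_mul (Finset.le_sup' α (Finset.mem_univ j))
          (Finset.le_sup' (fun j => g j (Sstar j)) (Finset.mem_univ j)) (hgnn j)
          ((hαnn j).trans (Finset.le_sup' α (Finset.mem_univ j))))
end

section
/- Extension of a nonnegative submodular function to a subadditive function with a zeroing element: let U be a finite set, i* ∉ U, V = U ∪ {i*}, and f̃ : 2^U → ℝ nonnegative submodular. Define g : 2^V → ℝ by g(A) = f̃(A) if i* ∉ A and g(A) = 0 if i* ∈ A. Then g is nonnegative and subadditive, and for A ⊆ U, g(A ∪ {i*}) − g(A) = −f̃(A), so minimizing A ↦ g(A ∪ {i*}) − g(A) over A ⊆ U is equivalent to maximizing f̃ over 2^U. -/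
/-- Extending a nonnegative submodular function on `U = V \ {i*}` by zero on sets
containing `i*` yields a nonnegative subadditive function `g`, whose marginal of `i*`
is `−f̃(A)`, so minimizing `A ↦ g(A ∪ {i*}) − g(A)` is equivalent to maximizing `f̃`. -/
theorem zeroing_extension_subadditive {W : Type*} [DecidableEq W] [Fintype W]
    (istar : W) (U : Finset W) (hU : U = Finset.univ.erase istar)
    (ft : Finset W → ℝ)
    (hnn : ∀ S : Finset W, S ⊆ U → 0 ≤ ft S)
    (hsubmod : ∀ S T : Finset W, S ⊆ U → T ⊆ U →
      ft (S ∪ T) + ft (S ∩ T) ≤ ft S + ft T)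
    (g : Finset W → ℝ)
    (hg : ∀ A : Finset W, g A = if istar ∈ A then 0 else ft A) :
    (∀ A : Finset W, 0 ≤ g A) ∧
    (∀ A B : Finset W, g (A ∪ B) ≤ g A + g B) ∧
    (∀ A : Finset W, A ⊆ U → g (insert istar A) - g A = -(ft A)) ∧
    (∀ A B : Finset W, A ⊆ U → B ⊆ U →
      ((g (insert istar A) - g A ≤ g (insert istar B) - g B) ↔ ft B ≤ ft A)) := by
  have hsub : ∀ A : Finset W, istar ∉ A → A ⊆ U := by
    intro A hA x hx
    rw [hU]
    exact Finset.mem_erase.2 ⟨fun h => hA (h ▸ hx), Finset.mem_univ x⟩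
  have h0 : ∀ A : Finset W, 0 ≤ g A := by
    intro A
    rw [hg]
    by_cases h : istar ∈ A
    · simp [h]
    · simpa [h] using hnn A (hsub A h)
  have hmarg : ∀ A : Finset W, A ⊆ U → g (insert istar A) - g A = -(ft A) := by
    intro A hA
    have hni : istar ∉ A := fun h => by
      have := hA h; rw [hU] at this; exact (Finset.mem_erase.1 this).1 rfl
    rw [hg, hg]
    simp [hni, Finset.mem_insert]
  refine ⟨h0, ?_, hmarg, ?_⟩
  · intro A B
    rw [hg (A ∪ B)]
    by_cases h : istar ∈ A ∪ B
    · simp only [h, if_true]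
      exact add_nonneg (h0 A) (h0 B)
    · have hA : istar ∉ A := fun hx => h (Finset.mem_union_left _ hx)
      have hB : istar ∉ B := fun hx => h (Finset.mem_union_right _ hx)
      rw [hg A, hg B]
      simp only [h, hA, hB, if_false]
      have := hsubmod A B (hsub A hA) (hsub B hB)
      have := hnn (A ∩ B) (fun x hx => hsub A hA (Finset.mem_inter.1 hx).1)
      linarith
  · intro A B hA hB
    rw [hmarg A hA, hmarg B hB]
    constructor <;> intro h <;> linarith
end

section
/- Edmonds' greedy vector lies in the polymatroid and is tight along the chain: let f : 2^V → ℝ be normalized nondecreasing submodular, let (v₁,…,v_n) be any ordering of V, L(h) = {v₁,…,v_h}, and define w_{v_h} = f(L(h)) − f(L(h−1)). Then w ≥ 0, w(S) ≤ f(S) for all S ⊆ V (i.e., w ∈ P(f)), and w(L(h)) = f(L(h)) for all h = 0,1,…,n. -/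
/-- Edmonds' greedy vector lies in the polymatroid and is tight along the chain:
for any ordering `v` of the ground set, with `L(h)` the first `h` elements and
`w_{v_h} = f(L(h)) − f(L(h−1))`, one has `w ≥ 0`, `w(S) ≤ f(S)` for all `S`, and
`w(L(h)) = f(L(h))` for all `h ≤ n`. -/
theorem edmonds_greedy_vector {n : ℕ} (f : Finset (Fin n) → ℝ)
    (hnorm : f ∅ = 0)
    (hmono : ∀ S T : Finset (Fin n), S ⊆ T → f S ≤ f T)
    (hsubmod : ∀ S T : Finset (Fin n), f (S ∪ T) + f (S ∩ T) ≤ f S + f T)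
    (v : Equiv.Perm (Fin n))
    (L : ℕ → Finset (Fin n))
    (hL : ∀ h : ℕ, L h = Finset.univ.filter (fun i => ((v.symm i : Fin n) : ℕ) < h))
    (w : Fin n → ℝ)
    (hw : ∀ i : Fin n, w i = f (L (((v.symm i : Fin n) : ℕ) + 1)) - f (L ((v.symm i : Fin n) : ℕ))) :
    (∀ i, 0 ≤ w i) ∧
    (∀ S : Finset (Fin n), ∑ i ∈ S, w i ≤ f S) ∧
    (∀ h : ℕ, h ≤ n → ∑ i ∈ L h, w i = f (L h)) := by
  have hmem : ∀ (h : ℕ) (i : Fin n), i ∈ L h ↔ ((v.symm i : Fin n) : ℕ) < h := by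
    intro h i; rw [hL]; simp
  have hL0 : L 0 = ∅ := by
    ext i; rw [hmem]; simp
  have hLn : L n = Finset.univ := by
    ext i; rw [hmem]; simp [(v.symm i).isLt]
  have hsucc : ∀ h : ℕ, ∀ hh : h < n, L (h+1) = insert (v ⟨h, hh⟩) (L h) := by
    intro h hh
    ext i
    simp only [hmem, Finset.mem_insert]
    constructor
    · intro hi
      rcases Nat.lt_succ_iff_lt_or_eq.mp hi with h1 | h1
      · exact Or.inr h1
      · left
        have : v.symm i = ⟨h, hh⟩ := Fin.ext h1
        rw [← this]; simp
    · rintro (rfl | h1)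
      · simp [Nat.lt_succ_iff]
      · exact Nat.lt_succ_of_lt h1
  have hnotmem : ∀ h : ℕ, ∀ hh : h < n, v ⟨h, hh⟩ ∉ L h := by
    intro h hh
    rw [hmem]; simp
  have hwv : ∀ h : ℕ, ∀ hh : h < n, w (v ⟨h, hh⟩) = f (L (h+1)) - f (L h) := by
    intro h hh; rw [hw]; simp
  have hLmono : ∀ h : ℕ, L h ⊆ L (h+1) := by
    intro h i; rw [hmem, hmem]; omega
  have hstab : ∀ h : ℕ, ¬ h < n → L (h+1) = L h := by
    intro h hh; ext i; rw [hmem, hmem]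
    have := (v.symm i).isLt; omega
  have hnonneg : ∀ i, 0 ≤ w i := by
    intro i
    rw [hw]
    have := hmono _ _ (hLmono ((v.symm i : Fin n) : ℕ))
    linarith
  have htight : ∀ h : ℕ, ∑ i ∈ L h, w i = f (L h) := by
    intro h
    induction h with
    | zero => simp [hL0, hnorm]
    | succ h ih =>
      by_cases hh : h < n
      · rw [hsucc h hh, Finset.sum_insert (hnotmem h hh), hwv h hh, ih,
          ← hsucc h hh]
        ring
      · rw [hstab h hh, ih]
  have hmain : ∀ h : ℕ, ∀ S : Finset (Fin n), S ⊆ L h → ∑ i ∈ S, w i ≤ f S := by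
    intro h
    induction h with
    | zero =>
      intro S hS
      rw [hL0] at hS
      simp [Finset.subset_empty.mp hS, hnorm]
    | succ h ih =>
      intro S hS
      by_cases hh : h < n
      · by_cases hv : v ⟨h, hh⟩ ∈ S
        · set x := v ⟨h, hh⟩ with hx
          have hS' : S.erase x ⊆ L h := by
            intro i hi
            have h1 := Finset.mem_of_mem_erase hi
            have h2 := Finset.ne_of_mem_erase hi
            have h3 := hS h1
            rw [hsucc h hh] at h3
            rcases Finset.mem_insert.mp h3 with h4 | h4
            · exact absurd h4 h2
            · exact h4
          have key := hsubmod S (L h)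
          have hU : S ∪ L h = L (h+1) := by
            apply Finset.Subset.antisymm
            · exact Finset.union_subset hS (hLmono h)
            · rw [hsucc h hh]
              intro i hi
              rcases Finset.mem_insert.mp hi with rfl | h3
              · exact Finset.mem_union_left _ hv
              · exact Finset.mem_union_right _ h3
          have hI : S ∩ L h = S.erase x := by
            ext i
            simp only [Finset.mem_inter, Finset.mem_erase]
            constructor
            · rintro ⟨h1, h2⟩
              refine ⟨?_, h1⟩
              rintro rfl
              exact hnotmem h hh h2
            · rintro ⟨h1, h2⟩
              refine ⟨h2, ?_⟩
              have h3 := hS h2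
              rw [hsucc h hh] at h3
              rcases Finset.mem_insert.mp h3 with h4 | h4
              · exact absurd h4 h1
              · exact h4
          rw [hU, hI] at key
          have hsum : ∑ i ∈ S, w i = w x + ∑ i ∈ S.erase x, w i :=
            (Finset.add_sum_erase _ _ hv).symm
          rw [hsum, hwv h hh]
          have := ih _ hS'
          linarith
        · apply ih
          intro i hi
          have h3 := hS hi
          rw [hsucc h hh] at h3
          rcases Finset.mem_insert.mp h3 with rfl | h4
          · exact absurd hi hv
          · exact h4
      · exact ih S (by rw [← hstab h hh]; exact hS)
  exact ⟨hnonneg, fun S => hmain n S (by rw [hLn]; exact Finset.subset_univ S),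
    fun h _ => htight h⟩
end
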